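/- Let X ⊆ {d,t,4} and Y ⊆ {d,t,b,4,5}. If a full nested sequent Γ is provable in the system NCK + weak + cut + X^{↓} + Y•, then its corresponding formula fm(Γ) is provable in the Hilbert system HCK+X+Y. -/

import Mathlib

/-! # Constructive modal logic: formulas and Hilbert systems -/

inductive Formula : Type
  | var : Nat → Formula
  | bot : Formula
  | and : Formula → Formula → Formula
  | or  : Formula → Formula → Formula
  | imp : Formula → Formula → Formula
  | box : Formula → Formula
  | dia : Formula → Formula
  deriving DecidableEq

/-- ⊤ abbreviates ⊥⊃⊥ -/
def Formula.top : Formula := Formula.imp Formula.bot Formula.bot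

/-- The five modal axioms d, t, b, 4, 5. -/
inductive Ax : Type
  | d | t | b | four | five
  deriving DecidableEq

/-- The formula scheme corresponding to each modal axiom. -/
def axForm : Ax → Formula → Formula
  | .d, A => Formula.imp (.box A) (.dia A)
  | .t, A => Formula.and (.imp A (.dia A)) (.imp (.box A) A)
  | .b, A => Formula.and (.imp A (.box (.dia A))) (.imp (.dia (.box A)) A)
  | .four, A => Formula.and (.imp (.dia (.dia A)) (.dia A)) (.imp (.box A) (.box (.box A)))
  | .five, A => Formula.and (.imp (.dia A) (.box (.dia A))) (.imp (.dia (.box A)) (.box A))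

/-- The Hilbert system HCK+X: a complete axiomatization of intuitionistic
propositional logic, plus k1 and k2, plus the modal axiom schemes in X,
closed under modus ponens and necessitation. -/
inductive Hck (X : Set Ax) : Formula → Prop
  | imp1 (A B : Formula) : Hck X (.imp A (.imp B A))
  | imp2 (A B C : Formula) :
      Hck X (.imp (.imp A (.imp B C)) (.imp (.imp A B) (.imp A C)))
  | andI (A B : Formula) : Hck X (.imp A (.imp B (.and A B)))
  | andE1 (A B : Formula) : Hck X (.imp (.and A B) A)
  | andE2 (A B : Formula) : Hck X (.imp (.and A B) B)
  | orI1 (A B : Formula) : Hck X (.imp A (.or A B))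
  | orI2 (A B : Formula) : Hck X (.imp B (.or A B))
  | orE (A B C : Formula) :
      Hck X (.imp (.imp A C) (.imp (.imp B C) (.imp (.or A B) C)))
  | exfalso (A : Formula) : Hck X (.imp .bot A)
  | k1 (A B : Formula) : Hck X (.imp (.box (.imp A B)) (.imp (.box A) (.box B)))
  | k2 (A B : Formula) : Hck X (.imp (.box (.imp A B)) (.imp (.dia A) (.dia B)))
  | ax {x : Ax} (A : Formula) : x ∈ X → Hck X (axForm x A)
  | mp {A B : Formula} : Hck X (.imp A B) → Hck X A → Hck X B
  | nec {A : Formula} : Hck X A → Hck X (.box A)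

/-! # Nested sequents -/

/-- LHS sequents: Φ ::= ∅ | A• | [Φ] | Φ,Φ -/
inductive LHS : Type
  | emp : LHS
  | fml : Formula → LHS
  | br : LHS → LHS
  | comma : LHS → LHS → LHS

/-- RHS sequents: Ψ ::= A∘ | [Φ,Ψ] -/
inductive RHS : Type
  | fml : Formula → RHS
  | br : LHS → RHS → RHS

/-- A full sequent: Φ,Ψ with exactly one output formula. -/
structure FullSeq where
  L : LHS
  R : RHS

/-- Corresponding formula of an LHS sequent. -/
def LHS.fm : LHS → Formula
  | .emp => Formula.top
  | .fml A => A
  | .br Φ => Formula.dia Φ.fm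
  | .comma Φ₁ Φ₂ => Formula.and Φ₁.fm Φ₂.fm

/-- Corresponding formula of an RHS sequent. -/
def RHS.fm : RHS → Formula
  | .fml A => A
  | .br Φ Ψ => Formula.box (Formula.imp Φ.fm Ψ.fm)

/-- Corresponding formula of a full sequent: fm(Φ,Ψ) = fm(Φ) ⊃ fm(Ψ). -/
def FullSeq.fm (S : FullSeq) : Formula := Formula.imp S.L.fm S.R.fm

/-! # Contexts -/

/-- An output context: Γ₁•,[Γ₂•,[…,[Γₙ•,{ }]…]]. -/
inductive OutCtx : Type
  | hole : LHS → OutCtx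
  | cons : LHS → OutCtx → OutCtx

/-- Filling an output context with an LHS sequent yields an LHS sequent. -/
def OutCtx.fillL : OutCtx → LHS → LHS
  | .hole Φ, Δ => Φ.comma Δ
  | .cons Φ C, Δ => Φ.comma (LHS.br (C.fillL Δ))

/-- Filling an output context with nothing (∅) yields an LHS sequent. -/
def OutCtx.fillE : OutCtx → LHS
  | .hole Φ => Φ
  | .cons Φ C => Φ.comma (LHS.br C.fillE)

/-- Filling an output context with an RHS sequent yields a full sequent. -/
def OutCtx.fillR : OutCtx → RHS → FullSeq
  | .hole Φ, Ψ => ⟨Φ, Ψ⟩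
  | .cons Φ C, Ψ => ⟨Φ, RHS.br (C.fillR Ψ).L (C.fillR Ψ).R⟩

/-- Filling an output context with a full sequent yields a full sequent. -/
def OutCtx.fillF : OutCtx → FullSeq → FullSeq
  | .hole Φ, S => ⟨Φ.comma S.L, S.R⟩
  | .cons Φ C, S => ⟨Φ, RHS.br (C.fillF S).L (C.fillF S).R⟩

/-- Depth of an output context: number of brackets around the hole. -/
def OutCtx.depth : OutCtx → Nat
  | .hole _ => 0
  | .cons _ C => C.depth + 1

def OutCtx.addL : LHS → OutCtx → OutCtx
  | Φ, .hole Φ' => .hole (Φ.comma Φ')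
  | Φ, .cons Φ' C => .cons (Φ.comma Φ') C

/-- Composition of output contexts (plugging one into the hole of the other). -/
def OutCtx.comp : OutCtx → OutCtx → OutCtx
  | .hole Φ, C => OutCtx.addL Φ C
  | .cons Φ C, C' => .cons Φ (C.comp C')

/-- An input context Γ'{Λ{ },Π∘} with Γ'{ }, Λ{ } output contexts, Π∘ an RHS
sequent.  Filled with an LHS sequent it yields a full sequent. -/
structure InCtx where
  outer : OutCtx
  inner : OutCtx
  out : RHS

/-- Filling an input context with an LHS sequent. -/
def InCtx.fill (G : InCtx) (Δ : LHS) : FullSeq :=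
  G.outer.fillF ⟨G.inner.fillL Δ, G.out⟩

/-- Output pruning Γ↓{ } = Γ'{Λ{ }} of an input context Γ'{Λ{ },Π∘}. -/
def InCtx.prune (G : InCtx) : OutCtx := G.outer.comp G.inner

/-- Depth of an input context. -/
def InCtx.depth (G : InCtx) : Nat := G.outer.depth + G.inner.depth

/-- [Φ]ⁿ : n brackets around an LHS sequent. -/
def LHS.brn : Nat → LHS → LHS
  | 0, Φ => Φ
  | n+1, Φ => LHS.br (LHS.brn n Φ)

/-- [Σ]ⁿ : n brackets around a full sequent (as a full sequent). -/
def FullSeq.nest : Nat → FullSeq → FullSeq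
  | 0, S => S
  | n+1, S => ⟨LHS.emp, RHS.br (FullSeq.nest n S).L (FullSeq.nest n S).R⟩

/-! # Equivalence of sequents (associativity/commutativity/unit of comma) -/

inductive SEqL : LHS → LHS → Prop
  | refl (Φ : LHS) : SEqL Φ Φ
  | symm {a b : LHS} : SEqL a b → SEqL b a
  | trans {a b c : LHS} : SEqL a b → SEqL b c → SEqL a c
  | comm (a b : LHS) : SEqL (a.comma b) (b.comma a)
  | assoc (a b c : LHS) : SEqL ((a.comma b).comma c) (a.comma (b.comma c))
  | unit (a : LHS) : SEqL (LHS.emp.comma a) a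
  | congComma {a a' b b' : LHS} : SEqL a a' → SEqL b b' → SEqL (a.comma b) (a'.comma b')
  | congBr {a a' : LHS} : SEqL a a' → SEqL a.br a'.br

inductive SEqR : RHS → RHS → Prop
  | refl (Ψ : RHS) : SEqR Ψ Ψ
  | symm {a b : RHS} : SEqR a b → SEqR b a
  | trans {a b c : RHS} : SEqR a b → SEqR b c → SEqR a c
  | congBr {Φ Φ' : LHS} {Ψ Ψ' : RHS} :
      SEqL Φ Φ' → SEqR Ψ Ψ' → SEqR (RHS.br Φ Ψ) (RHS.br Φ' Ψ')

def SEq (S T : FullSeq) : Prop := SEqL S.L T.L ∧ SEqR S.R T.R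

/-! # Inference rules -/

inductive RuleName : Type
  | id | botL | andL | andR | orL | orR | impL | impR
  | boxL | boxR | diaL | diaHatL | diaR | cont
  | weak | cut | nec
  | dDiaR | dBoxL | tDiaR | tBoxL | fourDiaR | fourBoxL
  | dSt | tSt | bSt | fourSt | fiveSt
  | s4R | s4L | s4Rdia | s4Lbox
  | sbSt | s5St | s5bSt | sb5St
  deriving DecidableEq

/-- Rule instances: `Step r prems concl` means that inferring the full sequent
`concl` from the list of full sequents `prems` is an instance of the rule `r`. -/
inductive Step : RuleName → List FullSeq → FullSeq → Prop
  /- id: Γ{a•,a∘} -/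
  | id (Γ : OutCtx) (a : Nat) :
      Step .id [] (Γ.fillF ⟨.fml (.var a), .fml (.var a)⟩)
  /- ⊥•: Γ{⊥•,Π∘} -/
  | botL (Γ : OutCtx) (Pn : RHS) :
      Step .botL [] (Γ.fillF ⟨.fml .bot, Pn⟩)
  /- ∧•: from Γ{A•,B•} infer Γ{(A∧B)•} -/
  | andL (Γ : InCtx) (A B : Formula) :
      Step .andL [Γ.fill ((LHS.fml A).comma (.fml B))] (Γ.fill (.fml (A.and B)))
  /- ∧∘: from Γ{A∘} and Γ{B∘} infer Γ{(A∧B)∘} -/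
  | andR (Γ : OutCtx) (A B : Formula) :
      Step .andR [Γ.fillR (.fml A), Γ.fillR (.fml B)] (Γ.fillR (.fml (A.and B)))
  /- ∨•: from Γ{A•,Π∘} and Γ{B•,Π∘} infer Γ{(A∨B)•,Π∘} -/
  | orL (Γ : OutCtx) (Pn : RHS) (A B : Formula) :
      Step .orL [Γ.fillF ⟨.fml A, Pn⟩, Γ.fillF ⟨.fml B, Pn⟩]
        (Γ.fillF ⟨.fml (A.or B), Pn⟩)
  /- ∨∘: from Γ{A∘} (or Γ{B∘}) infer Γ{(A∨B)∘} -/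
  | orR1 (Γ : OutCtx) (A B : Formula) :
      Step .orR [Γ.fillR (.fml A)] (Γ.fillR (.fml (A.or B)))
  | orR2 (Γ : OutCtx) (A B : Formula) :
      Step .orR [Γ.fillR (.fml B)] (Γ.fillR (.fml (A.or B)))
  /- ⊃•: from Γ↓{A∘} and Γ{B•} infer Γ{(A⊃B)•} -/
  | impL (Γ : InCtx) (A B : Formula) :
      Step .impL [Γ.prune.fillR (.fml A), Γ.fill (.fml B)] (Γ.fill (.fml (A.imp B)))
  /- ⊃∘: from Γ{A•,B∘} infer Γ{(A⊃B)∘} -/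
  | impR (Γ : OutCtx) (A B : Formula) :
      Step .impR [Γ.fillF ⟨.fml A, .fml B⟩] (Γ.fillR (.fml (A.imp B)))
  /- □•: from Γ{[A•,Δ]} infer Γ{(□A)•,[Δ]}, output elsewhere resp. in Δ -/
  | boxLIn (Γ : InCtx) (Δ : LHS) (A : Formula) :
      Step .boxL [Γ.fill (LHS.br ((LHS.fml A).comma Δ))]
        (Γ.fill ((LHS.fml A.box).comma Δ.br))
  | boxLOut (Γ : OutCtx) (Δ : FullSeq) (A : Formula) :
      Step .boxL [Γ.fillR (.br ((LHS.fml A).comma Δ.L) Δ.R)]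
        (Γ.fillF ⟨.fml A.box, .br Δ.L Δ.R⟩)
  /- □∘: from Γ{[A∘]} infer Γ{(□A)∘} -/
  | boxR (Γ : OutCtx) (A : Formula) :
      Step .boxR [Γ.fillR (.br .emp (.fml A))] (Γ.fillR (.fml A.box))
  /- ◇•: from Γ{[A•]} infer Γ{(◇A)•} -/
  | diaL (Γ : InCtx) (A : Formula) :
      Step .diaL [Γ.fill (LHS.br (.fml A))] (Γ.fill (.fml A.dia))
  /- ◇̂•: from Γ{[A•],Π∘} infer Γ{(◇A)•,Π∘} -/
  | diaHatL (Γ : OutCtx) (Pn : RHS) (A : Formula) :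
      Step .diaHatL [Γ.fillF ⟨LHS.br (.fml A), Pn⟩] (Γ.fillF ⟨.fml A.dia, Pn⟩)
  /- ◇∘: from Γ{[A∘,Δ]} infer Γ{(◇A)∘,[Δ]} -/
  | diaR (Γ : OutCtx) (Δ : LHS) (A : Formula) :
      Step .diaR [Γ.fillR (.br Δ (.fml A))] (Γ.fillF ⟨Δ.br, .fml A.dia⟩)
  /- cont: from Γ{Δ•,Δ•} infer Γ{Δ•} -/
  | cont (Γ : InCtx) (Δ : LHS) :
      Step .cont [Γ.fill (Δ.comma Δ)] (Γ.fill Δ)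
  /- weak: from Γ{∅} infer Γ{Δ•} -/
  | weak (Γ : InCtx) (Δ : LHS) :
      Step .weak [Γ.fill .emp] (Γ.fill Δ)
  /- cut: from Γ↓{A∘} and Γ{A•} infer Γ{∅} -/
  | cut (Γ : InCtx) (A : Formula) :
      Step .cut [Γ.prune.fillR (.fml A), Γ.fill (.fml A)] (Γ.fill .emp)
  /- nec: from Γ infer [Γ] -/
  | nec (S : FullSeq) :
      Step .nec [S] ⟨.emp, .br S.L S.R⟩
  /- ◇∘d: from Γ{[A∘]} infer Γ{(◇A)∘} -/
  | dDiaR (Γ : OutCtx) (A : Formula) :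
      Step .dDiaR [Γ.fillR (.br .emp (.fml A))] (Γ.fillR (.fml A.dia))
  /- □•d: from Γ{[A•]} infer Γ{(□A)•} -/
  | dBoxL (Γ : InCtx) (A : Formula) :
      Step .dBoxL [Γ.fill (LHS.br (.fml A))] (Γ.fill (.fml A.box))
  /- ◇∘t: from Γ{A∘} infer Γ{(◇A)∘} -/
  | tDiaR (Γ : OutCtx) (A : Formula) :
      Step .tDiaR [Γ.fillR (.fml A)] (Γ.fillR (.fml A.dia))
  /- □•t: from Γ{A•} infer Γ{(□A)•} -/
  | tBoxL (Γ : InCtx) (A : Formula) :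
      Step .tBoxL [Γ.fill (.fml A)] (Γ.fill (.fml A.box))
  /- ◇∘4: from Γ{[(◇A)∘,Δ]} infer Γ{(◇A)∘,[Δ]} -/
  | fourDiaR (Γ : OutCtx) (Δ : LHS) (A : Formula) :
      Step .fourDiaR [Γ.fillR (.br Δ (.fml A.dia))] (Γ.fillF ⟨Δ.br, .fml A.dia⟩)
  /- □•4: from Γ{[(□A)•,Δ]} infer Γ{(□A)•,[Δ]} -/
  | fourBoxLIn (Γ : InCtx) (Δ : LHS) (A : Formula) :
      Step .fourBoxL [Γ.fill (LHS.br ((LHS.fml A.box).comma Δ))]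
        (Γ.fill ((LHS.fml A.box).comma Δ.br))
  | fourBoxLOut (Γ : OutCtx) (Δ : FullSeq) (A : Formula) :
      Step .fourBoxL [Γ.fillR (.br ((LHS.fml A.box).comma Δ.L) Δ.R)]
        (Γ.fillF ⟨.fml A.box, .br Δ.L Δ.R⟩)
  /- d•: from Γ{[∅]} infer Γ{∅} -/
  | dSt (Γ : InCtx) :
      Step .dSt [Γ.fill (LHS.br .emp)] (Γ.fill .emp)
  /- t•: from Γ{[Σ]} infer Γ{Σ} -/
  | tStIn (Γ : InCtx) (Sg : LHS) :
      Step .tSt [Γ.fill Sg.br] (Γ.fill Sg)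
  | tStOut (Γ : OutCtx) (Sg : FullSeq) :
      Step .tSt [Γ.fillR (.br Sg.L Sg.R)] (Γ.fillF Sg)
  /- 4•: from Γ{[Σ]} infer Γ{[[Σ]]} -/
  | fourStIn (Γ : InCtx) (Sg : LHS) :
      Step .fourSt [Γ.fill Sg.br] (Γ.fill Sg.br.br)
  | fourStOut (Γ : OutCtx) (Sg : FullSeq) :
      Step .fourSt [Γ.fillR (.br Sg.L Sg.R)] (Γ.fillR (.br .emp (.br Sg.L Sg.R)))
  /- b•: from Γ{[[Σ],Δ]} infer Γ{Σ,[Δ]} -/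
  | bStIn (Γ : InCtx) (Sg Δ : LHS) :
      Step .bSt [Γ.fill (LHS.br (Sg.br.comma Δ))] (Γ.fill (Sg.comma Δ.br))
  | bStSig (Γ : OutCtx) (Sg : FullSeq) (Δ : LHS) :
      Step .bSt [Γ.fillR (.br Δ (.br Sg.L Sg.R))] (Γ.fillF ⟨Sg.L.comma Δ.br, Sg.R⟩)
  | bStDel (Γ : OutCtx) (Sg : LHS) (Δ : FullSeq) :
      Step .bSt [Γ.fillR (.br (Sg.br.comma Δ.L) Δ.R)] (Γ.fillF ⟨Sg, .br Δ.L Δ.R⟩)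
  /- 5•: from Γ{[[Σ],Δ]} infer Γ{[Σ],[Δ]} -/
  | fiveStIn (Γ : InCtx) (Sg Δ : LHS) :
      Step .fiveSt [Γ.fill (LHS.br (Sg.br.comma Δ))] (Γ.fill (Sg.br.comma Δ.br))
  | fiveStSig (Γ : OutCtx) (Sg : FullSeq) (Δ : LHS) :
      Step .fiveSt [Γ.fillR (.br Δ (.br Sg.L Sg.R))] (Γ.fillF ⟨Δ.br, .br Sg.L Sg.R⟩)
  | fiveStDel (Γ : OutCtx) (Sg : LHS) (Δ : FullSeq) :
      Step .fiveSt [Γ.fillR (.br (Sg.br.comma Δ.L) Δ.R)] (Γ.fillF ⟨Sg.br, .br Δ.L Δ.R⟩)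
  /- s4∘: from Γ{Δ{(◇A)∘}} infer Γ{(◇A)∘,Δ{∅}} -/
  | s4R (Γ Δ : OutCtx) (A : Formula) :
      Step .s4R [Γ.fillF (Δ.fillR (.fml A.dia))] (Γ.fillF ⟨Δ.fillE, .fml A.dia⟩)
  /- s4•: from Γ{Δ{(□A)•}} infer Γ{(□A)•,Δ{∅}} -/
  | s4LIn (Γ : InCtx) (Δ : OutCtx) (A : Formula) :
      Step .s4L [Γ.fill (Δ.fillL (.fml A.box))] (Γ.fill ((LHS.fml A.box).comma Δ.fillE))
  | s4LOut (Γ : OutCtx) (Δ : InCtx) (A : Formula) :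
      Step .s4L [Γ.fillF (Δ.fill (.fml A.box))]
        (Γ.fillF ⟨(LHS.fml A.box).comma (Δ.fill .emp).L, (Δ.fill .emp).R⟩)
  /- s4∘◇: from Γ{[Δ{A∘}]} infer Γ{(◇A)∘,[Δ{∅}]} -/
  | s4Rdia (Γ Δ : OutCtx) (A : Formula) :
      Step .s4Rdia [Γ.fillR (.br (Δ.fillR (.fml A)).L (Δ.fillR (.fml A)).R)]
        (Γ.fillF ⟨Δ.fillE.br, .fml A.dia⟩)
  /- s4•□: from Γ{[Δ{A•}]} infer Γ{(□A)•,[Δ{∅}]} -/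
  | s4LboxIn (Γ : InCtx) (Δ : OutCtx) (A : Formula) :
      Step .s4Lbox [Γ.fill (LHS.br (Δ.fillL (.fml A)))]
        (Γ.fill ((LHS.fml A.box).comma Δ.fillE.br))
  | s4LboxOut (Γ : OutCtx) (Δ : InCtx) (A : Formula) :
      Step .s4Lbox [Γ.fillR (.br (Δ.fill (.fml A)).L (Δ.fill (.fml A)).R)]
        (Γ.fillF ⟨.fml A.box, .br (Δ.fill .emp).L (Δ.fill .emp).R⟩)
  /- sb•: from Γ{Δ{[Σ]ⁿ}} infer Γ{Σ,Δ{∅}}, n the depth of Δ{ } -/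
  | sbStIn (Γ : InCtx) (Δ : OutCtx) (Sg : LHS) :
      Step .sbSt [Γ.fill (Δ.fillL (LHS.brn Δ.depth Sg))] (Γ.fill (Sg.comma Δ.fillE))
  | sbStMid (Γ : OutCtx) (Δ : InCtx) (Sg : LHS) :
      Step .sbSt [Γ.fillF (Δ.fill (LHS.brn Δ.depth Sg))]
        (Γ.fillF ⟨Sg.comma (Δ.fill .emp).L, (Δ.fill .emp).R⟩)
  | sbStOut (Γ Δ : OutCtx) (Sg : FullSeq) :
      Step .sbSt [Γ.fillF (Δ.fillF (FullSeq.nest Δ.depth Sg))]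
        (Γ.fillF ⟨Sg.L.comma Δ.fillE, Sg.R⟩)
  /- s5•: from Γ{Δ{[Σ]}} infer Γ{[Σ],Δ{∅}} -/
  | s5StIn (Γ : InCtx) (Δ : OutCtx) (Sg : LHS) :
      Step .s5St [Γ.fill (Δ.fillL Sg.br)] (Γ.fill (Sg.br.comma Δ.fillE))
  | s5StMid (Γ : OutCtx) (Δ : InCtx) (Sg : LHS) :
      Step .s5St [Γ.fillF (Δ.fill Sg.br)]
        (Γ.fillF ⟨Sg.br.comma (Δ.fill .emp).L, (Δ.fill .emp).R⟩)
  | s5StOut (Γ Δ : OutCtx) (Sg : FullSeq) :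
      Step .s5St [Γ.fillF (Δ.fillF ⟨.emp, .br Sg.L Sg.R⟩)]
        (Γ.fillF ⟨Δ.fillE, .br Sg.L Sg.R⟩)
  /- s5b•: from Γ{Δ{[Σ]ᵏ}} infer Γ{Σ,Δ{∅}}, 1 ≤ k ≤ depth of Δ{ } -/
  | s5bStIn (Γ : InCtx) (Δ : OutCtx) (Sg : LHS) (k : Nat)
      (h1 : 1 ≤ k) (h2 : k ≤ Δ.depth) :
      Step .s5bSt [Γ.fill (Δ.fillL (LHS.brn k Sg))] (Γ.fill (Sg.comma Δ.fillE))
  | s5bStMid (Γ : OutCtx) (Δ : InCtx) (Sg : LHS) (k : Nat)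
      (h1 : 1 ≤ k) (h2 : k ≤ Δ.depth) :
      Step .s5bSt [Γ.fillF (Δ.fill (LHS.brn k Sg))]
        (Γ.fillF ⟨Sg.comma (Δ.fill .emp).L, (Δ.fill .emp).R⟩)
  | s5bStOut (Γ Δ : OutCtx) (Sg : FullSeq) (k : Nat)
      (h1 : 1 ≤ k) (h2 : k ≤ Δ.depth) :
      Step .s5bSt [Γ.fillF (Δ.fillF (FullSeq.nest k Sg))]
        (Γ.fillF ⟨Sg.L.comma Δ.fillE, Sg.R⟩)
  /- sb5•: from Γ{Δ{[Σ]ᵏ}} infer Γ{[Σ],Δ{∅}}, 1 ≤ k ≤ depth of Δ{ } -/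
  | sb5StIn (Γ : InCtx) (Δ : OutCtx) (Sg : LHS) (k : Nat)
      (h1 : 1 ≤ k) (h2 : k ≤ Δ.depth) :
      Step .sb5St [Γ.fill (Δ.fillL (LHS.brn k Sg))] (Γ.fill (Sg.br.comma Δ.fillE))
  | sb5StMid (Γ : OutCtx) (Δ : InCtx) (Sg : LHS) (k : Nat)
      (h1 : 1 ≤ k) (h2 : k ≤ Δ.depth) :
      Step .sb5St [Γ.fillF (Δ.fill (LHS.brn k Sg))]
        (Γ.fillF ⟨Sg.br.comma (Δ.fill .emp).L, (Δ.fill .emp).R⟩)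
  | sb5StOut (Γ Δ : OutCtx) (Sg : FullSeq) (k : Nat)
      (h1 : 1 ≤ k) (h2 : k ≤ Δ.depth) :
      Step .sb5St [Γ.fillF (Δ.fillF (FullSeq.nest k Sg))]
        (Γ.fillF ⟨Δ.fillE, .br Sg.L Sg.R⟩)

/-! # Derivations -/

/-- `Deriv R n S`: the full sequent S has a derivation of height at most n
using the rules in R (sequents are treated up to AC-unit equivalence of
comma). -/
inductive Deriv (R : Set RuleName) : Nat → FullSeq → Prop
  | step {r : RuleName} {prems : List FullSeq} {S S' : FullSeq} {n : Nat} :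
      r ∈ R → Step r prems S → (∀ P ∈ prems, Deriv R n P) → SEq S S' →
      Deriv R (n+1) S'

/-- Provability in the system given by the rule set R. -/
def Provable (R : Set RuleName) (S : FullSeq) : Prop := ∃ n, Deriv R n S

/-- Derivations from a set of hypotheses (for derivability of rules). -/
inductive DerivFrom (R : Set RuleName) (H : Set FullSeq) : FullSeq → Prop
  | hyp {S S' : FullSeq} : S ∈ H → SEq S S' → DerivFrom R H S'
  | step {r : RuleName} {prems : List FullSeq} {S S' : FullSeq} :
      r ∈ R → Step r prems S → (∀ P ∈ prems, DerivFrom R H P) → SEq S S' →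
      DerivFrom R H S'

/-! # Rule sets -/

/-- The rules of NCK. -/
def NCKrules : Set RuleName :=
  {.id, .botL, .andL, .andR, .orL, .orR, .impL, .impR, .boxL, .boxR,
   .diaL, .diaR, .cont}

/-- The rules of NCK' (◇• replaced by ◇̂•). -/
def NCKP : Set RuleName :=
  {.id, .botL, .andL, .andR, .orL, .orR, .impL, .impR, .boxL, .boxR,
   .diaHatL, .diaR, .cont}

/-- X^{↓}: the logical ◇∘- and □•-rules for the axioms in X ⊆ {d,t,4}. -/
def lgRules (X : Set Ax) : Set RuleName := fun r =>
  (Ax.d ∈ X ∧ (r = .dDiaR ∨ r = .dBoxL)) ∨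
  (Ax.t ∈ X ∧ (r = .tDiaR ∨ r = .tBoxL)) ∨
  (Ax.four ∈ X ∧ (r = .fourDiaR ∨ r = .fourBoxL))

/-- The structural rule corresponding to a modal axiom. -/
def stRule : Ax → RuleName
  | .d => .dSt
  | .t => .tSt
  | .b => .bSt
  | .four => .fourSt
  | .five => .fiveSt

/-- Y•: the structural rules for the axioms in Y. -/
def stRules (Y : Set Ax) : Set RuleName := fun r => ∃ y ∈ Y, r = stRule y

/-- X^{↓}_s : the super variant of X^{↓}. -/
def lgRulesS (X : Set Ax) : Set RuleName := fun r =>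
  (r ∈ lgRules X ∧ r ≠ .fourDiaR ∧ r ≠ .fourBoxL) ∨
  (Ax.four ∈ X ∧ (r = .s4R ∨ r = .s4L ∨ r = .s4Rdia ∨ r = .s4Lbox))

/-- Y•_s : the super variant of Y•. -/
def stRulesS (Y : Set Ax) : Set RuleName := fun r =>
  (r ∈ stRules Y ∧ r ≠ .bSt ∧ r ≠ .fiveSt) ∨
  (Ax.b ∈ Y ∧ Ax.five ∉ Y ∧ r = .sbSt) ∨
  (Ax.five ∈ Y ∧ Ax.b ∉ Y ∧ r = .s5St) ∨
  (Ax.b ∈ Y ∧ Ax.five ∈ Y ∧ (r = .s5bSt ∨ r = .sb5St))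

/-- A safe pair of axiom sets. -/
def SafePair (X Y : Set Ax) : Prop :=
  X ⊆ {Ax.t, Ax.four} ∧ Y ⊆ {Ax.d, Ax.b, Ax.five} ∧
  (Ax.t ∈ X → Ax.five ∈ Y → Ax.b ∈ Y) ∧
  ((Ax.b ∈ Y ∨ Ax.five ∈ Y) → Ax.four ∈ X)

/-! # Auxiliary material for the soundness proof -/

section Toolkit

local infixr:60 " ⇒ " => Formula.imp
local infixr:68 " ⋏ " => Formula.and
local infixr:66 " ⋎ " => Formula.or
local prefix:75 "□" => Formula.box
local prefix:75 "◇" => Formula.dia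

variable {X : Set Ax}

/-- Hilbert provability from a list of hypotheses (no necessitation on
hypotheses, only on theorems). -/
inductive HckH (X : Set Ax) (H : List Formula) : Formula → Prop
  | hyp {A} : A ∈ H → HckH X H A
  | thm {A} : Hck X A → HckH X H A
  | mp {A B} : HckH X H (A ⇒ B) → HckH X H A → HckH X H B

theorem Hck.id (A : Formula) : Hck X (A ⇒ A) :=
  .mp (.mp (.imp2 A (A ⇒ A) A) (.imp1 A (A ⇒ A))) (.imp1 A A)

theorem HckH.wk {H H' : List Formula} {A} (hs : ∀ B ∈ H, B ∈ H')
    (h : HckH X H A) : HckH X H' A := by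
  induction h with
  | hyp h => exact .hyp (hs _ h)
  | thm h => exact .thm h
  | mp _ _ ih1 ih2 => exact .mp ih1 ih2

theorem HckH.ded {H : List Formula} {A B} (h : HckH X (A :: H) B) :
    HckH X H (A ⇒ B) := by
  induction h with
  | @hyp C hC =>
    rcases List.mem_cons.1 hC with rfl | hC
    · exact .thm (Hck.id _)
    · exact .mp (.thm (.imp1 _ _)) (.hyp hC)
  | thm h => exact .mp (.thm (.imp1 _ _)) (.thm h)
  | mp _ _ ih1 ih2 => exact .mp (.mp (.thm (.imp2 _ _ _)) ih1) ih2

theorem HckH.toHck {A} (h : HckH X [] A) : Hck X A := by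
  induction h with
  | hyp h => simp at h
  | thm h => exact h
  | mp _ _ ih1 ih2 => exact .mp ih1 ih2

theorem HckH.h0 {H : List Formula} {A} : HckH X (A :: H) A :=
  .hyp (List.mem_cons_self)

theorem HckH.h1 {H : List Formula} {A B} : HckH X (B :: A :: H) A :=
  .hyp (List.mem_cons_of_mem _ (List.mem_cons_self))

theorem HckH.h2 {H : List Formula} {A B C} : HckH X (C :: B :: A :: H) A :=
  .hyp (List.mem_cons_of_mem _ (List.mem_cons_of_mem _ (List.mem_cons_self)))

theorem HckH.andE1 {H A B} (h : HckH X H (A ⋏ B)) : HckH X H A :=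
  .mp (.thm (.andE1 _ _)) h
theorem HckH.andE2 {H A B} (h : HckH X H (A ⋏ B)) : HckH X H B :=
  .mp (.thm (.andE2 _ _)) h
theorem HckH.andI {H A B} (h1 : HckH X H A) (h2 : HckH X H B) :
    HckH X H (A ⋏ B) :=
  .mp (.mp (.thm (.andI _ _)) h1) h2

/-- Syllogism. -/
theorem Hck.syl {A B C} (h1 : Hck X (A ⇒ B)) (h2 : Hck X (B ⇒ C)) :
    Hck X (A ⇒ C) :=
  HckH.toHck (HckH.ded (.mp (.thm h2) (.mp (.thm h1) .h0)))

theorem Hck.top : Hck X Formula.top := Hck.id _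

theorem Hck.boxMono {A B} (h : Hck X (A ⇒ B)) : Hck X (□ A ⇒ □ B) :=
  .mp (.k1 _ _) (.nec h)

theorem Hck.diaMono {A B} (h : Hck X (A ⇒ B)) : Hck X (◇ A ⇒ ◇ B) :=
  .mp (.k2 _ _) (.nec h)

/-- From ⊢ A⇒B⇒C derive ⊢ □A⇒□B⇒□C. -/
theorem Hck.boxK2 {A B C} (h : Hck X (A ⇒ B ⇒ C)) :
    Hck X (□ A ⇒ □ B ⇒ □ C) :=
  HckH.toHck <| .ded <| .ded <|
    .mp (.mp (.thm (.k1 B C)) (.mp (.thm (.mp (.k1 _ _) (.nec h))) .h1)) .h0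

/-- From ⊢ A⇒B⇒C derive ⊢ □A⇒◇B⇒◇C. -/
theorem Hck.diaK2 {A B C} (h : Hck X (A ⇒ B ⇒ C)) :
    Hck X (□ A ⇒ ◇ B ⇒ ◇ C) :=
  HckH.toHck <| .ded <| .ded <|
    .mp (.mp (.thm (.k2 B C)) (.mp (.thm (.mp (.k1 _ _) (.nec h))) .h1)) .h0

/-! ## Formula-level context functions -/

/-- fm of `C.fillR Ψ` as a function of `Ψ.fm`. -/
def OutCtx.fmR : OutCtx → Formula → Formula
  | .hole Φ, ψ => Φ.fm ⇒ ψ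
  | .cons Φ C, ψ => Φ.fm ⇒ □ (C.fmR ψ)

/-- fm of `C.fillF S` as a function of `S.L.fm`, `S.R.fm`. -/
def OutCtx.fmF : OutCtx → Formula → Formula → Formula
  | .hole Φ, l, r => (Φ.fm ⋏ l) ⇒ r
  | .cons Φ C, l, r => Φ.fm ⇒ □ (C.fmF l r)

/-- fm of `C.fillL Δ` as a function of `Δ.fm`. -/
def OutCtx.fmL : OutCtx → Formula → Formula
  | .hole Φ, l => Φ.fm ⋏ l
  | .cons Φ C, l => Φ.fm ⋏ ◇ (C.fmL l)

theorem fillR_fm (C : OutCtx) (Ψ : RHS) : (C.fillR Ψ).fm = C.fmR Ψ.fm := by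
  induction C with
  | hole Φ => rfl
  | cons Φ C ih =>
    show (Φ.fm ⇒ □ (C.fillR Ψ).fm) = _
    rw [ih]; rfl

theorem fillF_fm (C : OutCtx) (S : FullSeq) :
    (C.fillF S).fm = C.fmF S.L.fm S.R.fm := by
  induction C with
  | hole Φ => rfl
  | cons Φ C ih =>
    show (Φ.fm ⇒ □ (C.fillF S).fm) = _
    rw [ih]; rfl

theorem fillL_fm (C : OutCtx) (Δ : LHS) : (C.fillL Δ).fm = C.fmL Δ.fm := by
  induction C with
  | hole Φ => rfl
  | cons Φ C ih =>
    show (Φ.fm ⋏ ◇ (C.fillL Δ).fm) = _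
    rw [ih]; rfl

theorem InCtx.fill_fm (G : InCtx) (Δ : LHS) :
    (G.fill Δ).fm = G.outer.fmF (G.inner.fmL Δ.fm) G.out.fm := by
  show (G.outer.fillF _).fm = _
  rw [fillF_fm]; show G.outer.fmF (G.inner.fillL Δ).fm _ = _
  rw [fillL_fm]

/-! ## Monotonicity lemmas for contexts -/

/-- If ⊢ fm S then ⊢ fm Γ{S}. -/
theorem ctxF0 (C : OutCtx) {l r : Formula} (h : Hck X (l ⇒ r)) :
    Hck X (C.fmF l r) := by
  induction C with
  | hole Φ => exact HckH.toHck <| .ded <| .mp (.thm h) (HckH.andE2 .h0)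
  | cons Φ C ih => exact HckH.toHck <| .ded <| .thm (.nec ih)

theorem ctxF1 (C : OutCtx) {l r l' r' : Formula}
    (h : Hck X ((l ⇒ r) ⇒ (l' ⇒ r'))) :
    Hck X (C.fmF l r ⇒ C.fmF l' r') := by
  induction C with
  | hole Φ =>
    refine HckH.toHck <| .ded <| .ded ?_
    have hl : HckH X [Φ.fm ⋏ l', (Φ.fm ⋏ l) ⇒ r] (l ⇒ r) :=
      .ded (.mp .h2 (HckH.andI (HckH.andE1 .h1) .h0))
    exact .mp (.mp (.thm h) hl) (HckH.andE2 .h0)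
  | cons Φ C ih =>
    exact HckH.toHck <| .ded <| .ded <| .mp (.thm (Hck.boxMono ih)) (.mp .h1 .h0)

theorem ctxF2 (C : OutCtx) {l1 r1 l2 r2 l r : Formula}
    (h : Hck X ((l1 ⇒ r1) ⇒ (l2 ⇒ r2) ⇒ (l ⇒ r))) :
    Hck X (C.fmF l1 r1 ⇒ C.fmF l2 r2 ⇒ C.fmF l r) := by
  induction C with
  | hole Φ =>
    refine HckH.toHck <| .ded <| .ded <| .ded ?_
    -- hyps: [Φ⋏l, (Φ⋏l2)⇒r2, (Φ⋏l1)⇒r1]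
    have hΦ : HckH X [Φ.fm ⋏ l, (Φ.fm ⋏ l2) ⇒ r2, (Φ.fm ⋏ l1) ⇒ r1] Φ.fm :=
      HckH.andE1 .h0
    have h1 : HckH X [Φ.fm ⋏ l, (Φ.fm ⋏ l2) ⇒ r2, (Φ.fm ⋏ l1) ⇒ r1] (l1 ⇒ r1) :=
      .ded (.mp (.hyp (by simp)) (HckH.andI (HckH.andE1 .h1) .h0))
    have h2 : HckH X [Φ.fm ⋏ l, (Φ.fm ⋏ l2) ⇒ r2, (Φ.fm ⋏ l1) ⇒ r1] (l2 ⇒ r2) :=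
      .ded (.mp (.hyp (by simp)) (HckH.andI (HckH.andE1 .h1) .h0))
    exact .mp (.mp (.mp (.thm h) h1) h2) (HckH.andE2 .h0)
  | cons Φ C ih =>
    refine HckH.toHck <| .ded <| .ded <| .ded ?_
    -- hyps: [Φ, Φ⇒□fmF2, Φ⇒□fmF1]
    exact .mp (.mp (.thm (Hck.boxK2 ih)) (.mp .h2 .h0)) (.mp .h1 .h0)

theorem ctxR1 (C : OutCtx) {p q : Formula} (h : Hck X (p ⇒ q)) :
    Hck X (C.fmR p ⇒ C.fmR q) := by
  induction C with
  | hole Φ =>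
    exact HckH.toHck <| .ded <| .ded <| .mp (.thm h) (.mp .h1 .h0)
  | cons Φ C ih =>
    exact HckH.toHck <| .ded <| .ded <| .mp (.thm (Hck.boxMono ih)) (.mp .h1 .h0)

theorem ctxR2 (C : OutCtx) {p q s : Formula} (h : Hck X (p ⇒ q ⇒ s)) :
    Hck X (C.fmR p ⇒ C.fmR q ⇒ C.fmR s) := by
  induction C with
  | hole Φ =>
    refine HckH.toHck <| .ded <| .ded <| .ded ?_
    exact .mp (.mp (.thm h) (.mp .h2 .h0)) (.mp .h1 .h0)
  | cons Φ C ih =>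
    refine HckH.toHck <| .ded <| .ded <| .ded ?_
    exact .mp (.mp (.thm (Hck.boxK2 ih)) (.mp .h2 .h0)) (.mp .h1 .h0)

/-- From ⊢ ψ ⇒ (l ⇒ r) infer ⊢ Γ{ψ∘} ⇒ Γ{l•, r∘}. -/
theorem ctxRF (C : OutCtx) {p l r : Formula} (h : Hck X (p ⇒ (l ⇒ r))) :
    Hck X (C.fmR p ⇒ C.fmF l r) := by
  induction C with
  | hole Φ =>
    refine HckH.toHck <| .ded <| .ded ?_
    -- hyps: [Φ⋏l, Φ⇒p]
    exact .mp (.mp (.thm h) (.mp .h1 (HckH.andE1 .h0))) (HckH.andE2 .h0)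
  | cons Φ C ih =>
    exact HckH.toHck <| .ded <| .ded <| .mp (.thm (Hck.boxMono ih)) (.mp .h1 .h0)

/-- From ⊢ (l ⇒ r) ⇒ ψ infer ⊢ Γ{l•, r∘} ⇒ Γ{ψ∘}. -/
theorem ctxFR (C : OutCtx) {p l r : Formula} (h : Hck X ((l ⇒ r) ⇒ p)) :
    Hck X (C.fmF l r ⇒ C.fmR p) := by
  induction C with
  | hole Φ =>
    refine HckH.toHck <| .ded <| .ded ?_
    -- hyps: [Φ, (Φ⋏l)⇒r]
    have hl : HckH X [Φ.fm, (Φ.fm ⋏ l) ⇒ r] (l ⇒ r) :=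
      .ded (.mp .h2 (HckH.andI .h1 .h0))
    exact .mp (.thm h) hl
  | cons Φ C ih =>
    exact HckH.toHck <| .ded <| .ded <| .mp (.thm (Hck.boxMono ih)) (.mp .h1 .h0)

/-- Covariance of fmL. -/
theorem ctxL1 (C : OutCtx) {l l' : Formula} (h : Hck X (l ⇒ l')) :
    Hck X (C.fmL l ⇒ C.fmL l') := by
  induction C with
  | hole Φ =>
    exact HckH.toHck <| .ded <|
      HckH.andI (HckH.andE1 .h0) (.mp (.thm h) (HckH.andE2 .h0))
  | cons Φ C ih =>
    exact HckH.toHck <| .ded <|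
      HckH.andI (HckH.andE1 .h0) (.mp (.thm (Hck.diaMono ih)) (HckH.andE2 .h0))

/-- Anti-monotonicity of input contexts. -/
theorem ctxIn1 (G : InCtx) {l l' : Formula} (h : Hck X (l' ⇒ l)) :
    Hck X (G.outer.fmF (G.inner.fmL l) G.out.fm ⇒
           G.outer.fmF (G.inner.fmL l') G.out.fm) := by
  refine ctxF1 _ ?_
  have hL : Hck X (G.inner.fmL l' ⇒ G.inner.fmL l) := ctxL1 _ h
  exact HckH.toHck <| .ded <| .ded <| .mp .h1 (.mp (.thm hL) .h0)

theorem addL_fmR (Φ : LHS) (C : OutCtx) (p : Formula) :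
    Hck X ((OutCtx.addL Φ C).fmR p ⇒ (Φ.fm ⇒ C.fmR p)) := by
  have curry : ∀ a b c : Formula, Hck X (((a ⋏ b) ⇒ c) ⇒ (a ⇒ b ⇒ c)) := by
    intro a b c
    exact HckH.toHck <| .ded <| .ded <| .ded <| .mp .h2 (HckH.andI .h1 .h0)
  cases C with
  | hole Φ' => exact curry _ _ _
  | cons Φ' C => exact curry _ _ _

theorem ctxInner (Ci : OutCtx) {A l l' : Formula} (h : Hck X (A ⇒ l' ⇒ l)) :
    Hck X (Ci.fmR A ⇒ (Ci.fmL l' ⇒ Ci.fmL l)) := by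
  induction Ci with
  | hole Φ =>
    refine HckH.toHck <| .ded <| .ded ?_
    -- hyps: [Φ⋏l', Φ⇒A]
    have hΦ : HckH X [Φ.fm ⋏ l', Φ.fm ⇒ A] Φ.fm := HckH.andE1 .h0
    have hA : HckH X [Φ.fm ⋏ l', Φ.fm ⇒ A] A := .mp .h1 hΦ
    exact HckH.andI hΦ (.mp (.mp (.thm h) hA) (HckH.andE2 .h0))
  | cons Φ C ih =>
    refine HckH.toHck <| .ded <| .ded ?_
    -- hyps: [Φ⋏◇fmL l', Φ⇒□fmR A]
    have hΦ : HckH X [Φ.fm ⋏ ◇ (C.fmL l'), Φ.fm ⇒ □ (C.fmR A)] Φ.fm :=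
      HckH.andE1 .h0
    have hbox : HckH X [Φ.fm ⋏ ◇ (C.fmL l'), Φ.fm ⇒ □ (C.fmR A)]
        (□ (C.fmR A)) := .mp .h1 hΦ
    exact HckH.andI hΦ
      (.mp (.mp (.thm (Hck.diaK2 ih)) hbox) (HckH.andE2 .h0))

/-- Key lemma for the soundness of ⊃• and cut. -/
theorem keyCut (Co : OutCtx) (Ci : OutCtx) (out : Formula) {A l l' : Formula}
    (h : Hck X (A ⇒ l' ⇒ l)) :
    Hck X ((Co.comp Ci).fmR A ⇒
      Co.fmF (Ci.fmL l) out ⇒ Co.fmF (Ci.fmL l') out) := by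
  induction Co with
  | cons Φ C ih =>
    refine HckH.toHck <| .ded <| .ded <| .ded ?_
    exact .mp (.mp (.thm (Hck.boxK2 ih)) (.mp .h2 .h0)) (.mp .h1 .h0)
  | hole Φ =>
    refine HckH.toHck <| .ded <| .ded <| .ded ?_
    -- hyps: [Φ⋏fmL l', (Φ⋏fmL l)⇒out, (addL Φ Ci).fmR A]
    have hΦ : HckH X [Φ.fm ⋏ Ci.fmL l', (Φ.fm ⋏ Ci.fmL l) ⇒ out,
        (OutCtx.addL Φ Ci).fmR A] Φ.fm := HckH.andE1 .h0
    have hCiA : HckH X [Φ.fm ⋏ Ci.fmL l', (Φ.fm ⋏ Ci.fmL l) ⇒ out,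
        (OutCtx.addL Φ Ci).fmR A] (Ci.fmR A) :=
      .mp (.mp (.thm (addL_fmR _ _ _)) .h2) hΦ
    have hl : HckH X [Φ.fm ⋏ Ci.fmL l', (Φ.fm ⋏ Ci.fmL l) ⇒ out,
        (OutCtx.addL Φ Ci).fmR A] (Ci.fmL l) :=
      .mp (.mp (.thm (ctxInner _ h)) hCiA) (HckH.andE2 .h0)
    exact .mp .h1 (HckH.andI hΦ hl)

/-! ## Equivalent sequents have equivalent formulas -/

theorem seqL_fm {a b : LHS} (h : SEqL a b) :
    Hck X (a.fm ⇒ b.fm) ∧ Hck X (b.fm ⇒ a.fm) := by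
  induction h with
  | refl a => exact ⟨Hck.id _, Hck.id _⟩
  | symm _ ih => exact ⟨ih.2, ih.1⟩
  | trans _ _ ih1 ih2 => exact ⟨ih1.1.syl ih2.1, ih2.2.syl ih1.2⟩
  | comm a b =>
    constructor <;>
      exact HckH.toHck (.ded (HckH.andI (HckH.andE2 .h0) (HckH.andE1 .h0)))
  | assoc a b c =>
    constructor
    · exact HckH.toHck <| .ded <| HckH.andI (HckH.andE1 (HckH.andE1 .h0))
        (HckH.andI (HckH.andE2 (HckH.andE1 .h0)) (HckH.andE2 .h0))
    · exact HckH.toHck <| .ded <| HckH.andI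
        (HckH.andI (HckH.andE1 .h0) (HckH.andE1 (HckH.andE2 .h0)))
        (HckH.andE2 (HckH.andE2 .h0))
  | unit a =>
    exact ⟨.andE2 _ _, HckH.toHck (.ded (HckH.andI (.thm Hck.top) .h0))⟩
  | congComma _ _ ih1 ih2 =>
    constructor
    · exact HckH.toHck <| .ded <| HckH.andI
        (.mp (.thm ih1.1) (HckH.andE1 .h0)) (.mp (.thm ih2.1) (HckH.andE2 .h0))
    · exact HckH.toHck <| .ded <| HckH.andI
        (.mp (.thm ih1.2) (HckH.andE1 .h0)) (.mp (.thm ih2.2) (HckH.andE2 .h0))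
  | congBr _ ih => exact ⟨ih.1.diaMono, ih.2.diaMono⟩

theorem impCong {a a' b b' : Formula}
    (h1 : Hck X (a' ⇒ a)) (h2 : Hck X (b ⇒ b')) :
    Hck X ((a ⇒ b) ⇒ (a' ⇒ b')) :=
  HckH.toHck <| .ded <| .ded <| .mp (.thm h2) (.mp .h1 (.mp (.thm h1) .h0))

theorem seqR_fm {a b : RHS} (h : SEqR a b) :
    Hck X (a.fm ⇒ b.fm) ∧ Hck X (b.fm ⇒ a.fm) := by
  induction h with
  | refl a => exact ⟨Hck.id _, Hck.id _⟩
  | symm _ ih => exact ⟨ih.2, ih.1⟩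
  | trans _ _ ih1 ih2 => exact ⟨ih1.1.syl ih2.1, ih2.2.syl ih1.2⟩
  | @congBr Φ Φ' Ψ Ψ' hL _ ih =>
    obtain ⟨hl1, hl2⟩ := seqL_fm (X := X) hL
    exact ⟨(impCong hl2 ih.1).boxMono, (impCong hl1 ih.2).boxMono⟩

theorem seq_fm {S T : FullSeq} (h : SEq S T) (hp : Hck X S.fm) : Hck X T.fm := by
  obtain ⟨hL, hR⟩ := h
  obtain ⟨hl1, hl2⟩ := seqL_fm (X := X) hL
  obtain ⟨hr1, hr2⟩ := seqR_fm (X := X) hR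
  exact .mp (impCong hl2 hr1) hp

/-! ## Analysis of the rule set -/

theorem hrElim {X Y : Set Ax} {r : RuleName}
    (hr : r ∈ NCKrules ∪ {RuleName.weak, RuleName.cut} ∪ lgRules X ∪ stRules Y) :
    r ∈ NCKrules ∨ r = .weak ∨ r = .cut ∨
    (Ax.d ∈ X ∧ (r = .dDiaR ∨ r = .dBoxL)) ∨
    (Ax.t ∈ X ∧ (r = .tDiaR ∨ r = .tBoxL)) ∨
    (Ax.four ∈ X ∧ (r = .fourDiaR ∨ r = .fourBoxL)) ∨
    (Ax.d ∈ Y ∧ r = .dSt) ∨ (Ax.t ∈ Y ∧ r = .tSt) ∨ (Ax.b ∈ Y ∧ r = .bSt) ∨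
    (Ax.four ∈ Y ∧ r = .fourSt) ∨ (Ax.five ∈ Y ∧ r = .fiveSt) := by
  rcases hr with (((h | h) | h) | h)
  · exact Or.inl h
  · rcases h with rfl | h
    · exact Or.inr (Or.inl rfl)
    · exact Or.inr (Or.inr (Or.inl h))
  · have h' : (Ax.d ∈ X ∧ (r = .dDiaR ∨ r = .dBoxL)) ∨
      (Ax.t ∈ X ∧ (r = .tDiaR ∨ r = .tBoxL)) ∨
      (Ax.four ∈ X ∧ (r = .fourDiaR ∨ r = .fourBoxL)) := h
    tauto
  · obtain ⟨y, hy, rfl⟩ := h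
    cases y <;> simp [stRule] <;> tauto

/-! ## Derived rules and axiom accessors -/

theorem Hck.uncurry {a b c : Formula} (h : Hck X (a ⇒ b ⇒ c)) :
    Hck X ((a ⋏ b) ⇒ c) :=
  HckH.toHck <| .ded <| .mp (.mp (.thm h) (HckH.andE1 .h0)) (HckH.andE2 .h0)

theorem Hck.curry {a b c : Formula} (h : Hck X ((a ⋏ b) ⇒ c)) :
    Hck X (a ⇒ b ⇒ c) :=
  HckH.toHck <| .ded <| .ded <| .mp (.thm h) (HckH.andI .h1 .h0)

theorem axD {A : Formula} (h : Ax.d ∈ X) : Hck X (□ A ⇒ ◇ A) :=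
  Hck.ax (x := .d) A h
theorem axT1 {A : Formula} (h : Ax.t ∈ X) : Hck X (A ⇒ ◇ A) :=
  .mp (.andE1 _ _) (Hck.ax (x := .t) A h)
theorem axT2 {A : Formula} (h : Ax.t ∈ X) : Hck X (□ A ⇒ A) :=
  .mp (.andE2 _ _) (Hck.ax (x := .t) A h)
theorem axB1 {A : Formula} (h : Ax.b ∈ X) : Hck X (A ⇒ □ ◇ A) :=
  .mp (.andE1 _ _) (Hck.ax (x := .b) A h)
theorem axB2 {A : Formula} (h : Ax.b ∈ X) : Hck X (◇ □ A ⇒ A) :=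
  .mp (.andE2 _ _) (Hck.ax (x := .b) A h)
theorem ax41 {A : Formula} (h : Ax.four ∈ X) : Hck X (◇ ◇ A ⇒ ◇ A) :=
  .mp (.andE1 _ _) (Hck.ax (x := .four) A h)
theorem ax42 {A : Formula} (h : Ax.four ∈ X) : Hck X (□ A ⇒ □ □ A) :=
  .mp (.andE2 _ _) (Hck.ax (x := .four) A h)
theorem ax51 {A : Formula} (h : Ax.five ∈ X) : Hck X (◇ A ⇒ □ ◇ A) :=
  .mp (.andE1 _ _) (Hck.ax (x := .five) A h)
theorem ax52 {A : Formula} (h : Ax.five ∈ X) : Hck X (◇ □ A ⇒ □ A) :=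
  .mp (.andE2 _ _) (Hck.ax (x := .five) A h)

/-! ## Soundness of each rule -/

set_option maxHeartbeats 2000000 in
theorem step_sound {X Y : Set Ax} {r : RuleName} {prems : List FullSeq}
    {S : FullSeq}
    (hr : r ∈ NCKrules ∪ {RuleName.weak, RuleName.cut} ∪ lgRules X ∪ stRules Y)
    (hs : Step r prems S)
    (ih : ∀ P ∈ prems, Hck (X ∪ Y) P.fm) : Hck (X ∪ Y) S.fm := by
  set Z := X ∪ Y with hZ
  cases hs with
  | id Γ a =>
    rw [fillF_fm]
    exact ctxF0 _ (Hck.id _)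
  | botL Γ Pn =>
    rw [fillF_fm]
    exact ctxF0 _ (.exfalso _)
  | andL Γ A B =>
    have h1 := ih _ (List.mem_cons_self)
    rw [InCtx.fill_fm] at h1 ⊢
    exact h1
  | andR Γ A B =>
    have h1 := ih _ (List.mem_cons_self)
    have h2 := ih _ (List.mem_cons_of_mem _ (List.mem_cons_self))
    rw [fillR_fm] at h1 h2 ⊢
    exact .mp (.mp (ctxR2 _ (.andI A B)) h1) h2
  | orL Γ Pn A B =>
    have h1 := ih _ (List.mem_cons_self)
    have h2 := ih _ (List.mem_cons_of_mem _ (List.mem_cons_self))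
    rw [fillF_fm] at h1 h2 ⊢
    exact .mp (.mp (ctxF2 _ (.orE A B Pn.fm)) h1) h2
  | orR1 Γ A B =>
    have h1 := ih _ (List.mem_cons_self)
    rw [fillR_fm] at h1 ⊢
    exact .mp (ctxR1 _ (.orI1 A B)) h1
  | orR2 Γ A B =>
    have h1 := ih _ (List.mem_cons_self)
    rw [fillR_fm] at h1 ⊢
    exact .mp (ctxR1 _ (.orI2 A B)) h1
  | impL Γ A B =>
    have h1 := ih _ (List.mem_cons_self)
    have h2 := ih _ (List.mem_cons_of_mem _ (List.mem_cons_self))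
    rw [fillR_fm] at h1
    rw [InCtx.fill_fm] at h2 ⊢
    have taut : Hck Z (A ⇒ (A ⇒ B) ⇒ B) :=
      HckH.toHck <| .ded <| .ded <| .mp .h0 .h1
    exact .mp (.mp (keyCut _ _ _ taut) h1) h2
  | impR Γ A B =>
    have h1 := ih _ (List.mem_cons_self)
    rw [fillF_fm] at h1
    rw [fillR_fm]
    exact .mp (ctxFR _ (Hck.id _)) h1
  | boxLIn Γ Δ A =>
    have h1 := ih _ (List.mem_cons_self)
    rw [InCtx.fill_fm] at h1 ⊢
    exact .mp (ctxIn1 Γ (Hck.uncurry (Hck.diaK2 (.andI _ _)))) h1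
  | boxLOut Γ Δ A =>
    have h1 := ih _ (List.mem_cons_self)
    rw [fillR_fm] at h1
    rw [fillF_fm]
    have taut : Hck Z (((A ⋏ Δ.L.fm) ⇒ Δ.R.fm) ⇒ (A ⇒ (Δ.L.fm ⇒ Δ.R.fm))) :=
      HckH.toHck <| .ded <| .ded <| .ded <| .mp .h2 (HckH.andI .h1 .h0)
    exact .mp (ctxRF _ (Hck.boxK2 taut)) h1
  | boxR Γ A =>
    have h1 := ih _ (List.mem_cons_self)
    rw [fillR_fm] at h1 ⊢
    have taut : Hck Z ((Formula.top ⇒ A) ⇒ A) :=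
      HckH.toHck <| .ded <| .mp .h0 (.thm Hck.top)
    exact .mp (ctxR1 _ (Hck.boxMono taut)) h1
  | diaL Γ A =>
    have h1 := ih _ (List.mem_cons_self)
    rw [InCtx.fill_fm] at h1 ⊢
    exact h1
  | diaHatL Γ Pn A =>
    have hm := hrElim hr; simp [NCKrules] at hm
  | diaR Γ Δ A =>
    have h1 := ih _ (List.mem_cons_self)
    rw [fillR_fm] at h1
    rw [fillF_fm]
    exact .mp (ctxRF _ (.k2 _ _)) h1
  | cont Γ Δ =>
    have h1 := ih _ (List.mem_cons_self)
    rw [InCtx.fill_fm] at h1 ⊢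
    exact .mp (ctxIn1 Γ (HckH.toHck (.ded (HckH.andI .h0 .h0)))) h1
  | weak Γ Δ =>
    have h1 := ih _ (List.mem_cons_self)
    rw [InCtx.fill_fm] at h1 ⊢
    exact .mp (ctxIn1 Γ (HckH.toHck (.ded (.thm Hck.top)))) h1
  | cut Γ A =>
    have h1 := ih _ (List.mem_cons_self)
    have h2 := ih _ (List.mem_cons_of_mem _ (List.mem_cons_self))
    rw [fillR_fm] at h1
    rw [InCtx.fill_fm] at h2 ⊢
    have taut : Hck Z (A ⇒ (Formula.top ⇒ A)) := .imp1 _ _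
    exact .mp (.mp (keyCut _ _ _ taut) h1) h2
  | nec S =>
    have hm := hrElim hr; simp [NCKrules] at hm
  | dDiaR Γ A =>
    have hm := hrElim hr; simp [NCKrules] at hm
    have h1 := ih _ (List.mem_cons_self)
    rw [fillR_fm] at h1 ⊢
    have taut : Hck Z ((Formula.top ⇒ A) ⇒ A) :=
      HckH.toHck <| .ded <| .mp .h0 (.thm Hck.top)
    exact .mp (ctxR1 _ ((Hck.boxMono taut).syl (axD (Set.mem_union_left _ hm)))) h1
  | dBoxL Γ A =>
    have hm := hrElim hr; simp [NCKrules] at hm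
    have h1 := ih _ (List.mem_cons_self)
    rw [InCtx.fill_fm] at h1 ⊢
    exact .mp (ctxIn1 Γ (axD (Set.mem_union_left _ hm))) h1
  | tDiaR Γ A =>
    have hm := hrElim hr; simp [NCKrules] at hm
    have h1 := ih _ (List.mem_cons_self)
    rw [fillR_fm] at h1 ⊢
    exact .mp (ctxR1 _ (axT1 (Set.mem_union_left _ hm))) h1
  | tBoxL Γ A =>
    have hm := hrElim hr; simp [NCKrules] at hm
    have h1 := ih _ (List.mem_cons_self)
    rw [InCtx.fill_fm] at h1 ⊢
    exact .mp (ctxIn1 Γ (axT2 (Set.mem_union_left _ hm))) h1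
  | fourDiaR Γ Δ A =>
    have hm := hrElim hr; simp [NCKrules] at hm
    have h1 := ih _ (List.mem_cons_self)
    rw [fillR_fm] at h1
    rw [fillF_fm]
    have h4 : Hck Z (◇ ◇ A ⇒ ◇ A) := ax41 (Set.mem_union_left _ hm)
    have core : Hck Z (□ (Δ.fm ⇒ ◇ A) ⇒ (◇ Δ.fm ⇒ ◇ A)) :=
      HckH.toHck <| .ded <| .ded <|
        .mp (.thm h4) (.mp (.mp (.thm (.k2 _ _)) .h1) .h0)
    exact .mp (ctxRF _ core) h1
  | fourBoxLIn Γ Δ A =>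
    have hm := hrElim hr; simp [NCKrules] at hm
    have h1 := ih _ (List.mem_cons_self)
    rw [InCtx.fill_fm] at h1 ⊢
    have h4 : Hck Z (□ A ⇒ □ □ A) := ax42 (Set.mem_union_left _ hm)
    have core : Hck Z ((□ A ⋏ ◇ Δ.fm) ⇒ ◇ (□ A ⋏ Δ.fm)) :=
      Hck.uncurry <| HckH.toHck <| .ded <|
        .mp (.thm (Hck.diaK2 (.andI _ _))) (.mp (.thm h4) .h0)
    exact .mp (ctxIn1 Γ core) h1
  | fourBoxLOut Γ Δ A =>
    have hm := hrElim hr; simp [NCKrules] at hm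
    have h1 := ih _ (List.mem_cons_self)
    rw [fillR_fm] at h1
    rw [fillF_fm]
    have h4 : Hck Z (□ A ⇒ □ □ A) := ax42 (Set.mem_union_left _ hm)
    have taut : Hck Z (((□ A ⋏ Δ.L.fm) ⇒ Δ.R.fm) ⇒ (□ A ⇒ (Δ.L.fm ⇒ Δ.R.fm))) :=
      HckH.toHck <| .ded <| .ded <| .ded <| .mp .h2 (HckH.andI .h1 .h0)
    have core : Hck Z (□ ((□ A ⋏ Δ.L.fm) ⇒ Δ.R.fm) ⇒ (□ A ⇒ □ (Δ.L.fm ⇒ Δ.R.fm))) :=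
      HckH.toHck <| .ded <| .ded <|
        .mp (.mp (.thm (Hck.boxK2 taut)) .h1) (.mp (.thm h4) .h0)
    exact .mp (ctxRF _ core) h1
  | dSt Γ =>
    have hm := hrElim hr; simp [NCKrules] at hm
    have h1 := ih _ (List.mem_cons_self)
    rw [InCtx.fill_fm] at h1 ⊢
    have core : Hck Z (Formula.top ⇒ ◇ Formula.top) :=
      HckH.toHck <| .ded <| .thm
        (.mp (axD (Set.mem_union_right _ hm)) (.nec Hck.top))
    exact .mp (ctxIn1 Γ core) h1
  | tStIn Γ Sg =>
    have hm := hrElim hr; simp [NCKrules] at hm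
    have h1 := ih _ (List.mem_cons_self)
    rw [InCtx.fill_fm] at h1 ⊢
    exact .mp (ctxIn1 Γ (axT1 (Set.mem_union_right _ hm))) h1
  | tStOut Γ Sg =>
    have hm := hrElim hr; simp [NCKrules] at hm
    have h1 := ih _ (List.mem_cons_self)
    rw [fillR_fm] at h1
    rw [fillF_fm]
    exact .mp (ctxRF _ (axT2 (Set.mem_union_right _ hm))) h1
  | fourStIn Γ Sg =>
    have hm := hrElim hr; simp [NCKrules] at hm
    have h1 := ih _ (List.mem_cons_self)
    rw [InCtx.fill_fm] at h1 ⊢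
    exact .mp (ctxIn1 Γ (ax41 (Set.mem_union_right _ hm))) h1
  | fourStOut Γ Sg =>
    have hm := hrElim hr; simp [NCKrules] at hm
    have h1 := ih _ (List.mem_cons_self)
    rw [fillR_fm] at h1 ⊢
    have core : Hck Z (□ (Sg.L.fm ⇒ Sg.R.fm) ⇒
        □ (Formula.top ⇒ □ (Sg.L.fm ⇒ Sg.R.fm))) :=
      (ax42 (Set.mem_union_right _ hm)).syl (Hck.boxMono (.imp1 _ _))
    exact .mp (ctxR1 _ core) h1
  | bStIn Γ Sg Δ =>
    have hm := hrElim hr; simp [NCKrules] at hm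
    have h1 := ih _ (List.mem_cons_self)
    rw [InCtx.fill_fm] at h1 ⊢
    have hb : Hck Z (Sg.fm ⇒ □ ◇ Sg.fm) := axB1 (Set.mem_union_right _ hm)
    have core : Hck Z ((Sg.fm ⋏ ◇ Δ.fm) ⇒ ◇ (◇ Sg.fm ⋏ Δ.fm)) :=
      Hck.uncurry <| HckH.toHck <| .ded <|
        .mp (.thm (Hck.diaK2 (.andI _ _))) (.mp (.thm hb) .h0)
    exact .mp (ctxIn1 Γ core) h1
  | bStSig Γ Sg Δ =>
    have hm := hrElim hr; simp [NCKrules] at hm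
    have h1 := ih _ (List.mem_cons_self)
    rw [fillR_fm] at h1
    rw [fillF_fm]
    have hb : Hck Z (◇ □ (Sg.L.fm ⇒ Sg.R.fm) ⇒ (Sg.L.fm ⇒ Sg.R.fm)) :=
      axB2 (Set.mem_union_right _ hm)
    have core : Hck Z (□ (Δ.fm ⇒ □ (Sg.L.fm ⇒ Sg.R.fm)) ⇒
        ((Sg.L.fm ⋏ ◇ Δ.fm) ⇒ Sg.R.fm)) := by
      refine HckH.toHck <| .ded <| .ded ?_
      have hdb : HckH Z [Sg.L.fm ⋏ ◇ Δ.fm, □ (Δ.fm ⇒ □ (Sg.L.fm ⇒ Sg.R.fm))]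
          (◇ □ (Sg.L.fm ⇒ Sg.R.fm)) :=
        .mp (.mp (.thm (.k2 _ _)) .h1) (HckH.andE2 .h0)
      exact .mp (.mp (.thm hb) hdb) (HckH.andE1 .h0)
    exact .mp (ctxRF _ core) h1
  | bStDel Γ Sg Δ =>
    have hm := hrElim hr; simp [NCKrules] at hm
    have h1 := ih _ (List.mem_cons_self)
    rw [fillR_fm] at h1
    rw [fillF_fm]
    have hb : Hck Z (Sg.fm ⇒ □ ◇ Sg.fm) := axB1 (Set.mem_union_right _ hm)
    have taut : Hck Z (((◇ Sg.fm ⋏ Δ.L.fm) ⇒ Δ.R.fm) ⇒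
        (◇ Sg.fm ⇒ (Δ.L.fm ⇒ Δ.R.fm))) :=
      HckH.toHck <| .ded <| .ded <| .ded <| .mp .h2 (HckH.andI .h1 .h0)
    have core : Hck Z (□ ((◇ Sg.fm ⋏ Δ.L.fm) ⇒ Δ.R.fm) ⇒
        (Sg.fm ⇒ □ (Δ.L.fm ⇒ Δ.R.fm))) :=
      HckH.toHck <| .ded <| .ded <|
        .mp (.mp (.thm (Hck.boxK2 taut)) .h1) (.mp (.thm hb) .h0)
    exact .mp (ctxRF _ core) h1
  | fiveStIn Γ Sg Δ =>
    have hm := hrElim hr; simp [NCKrules] at hm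
    have h1 := ih _ (List.mem_cons_self)
    rw [InCtx.fill_fm] at h1 ⊢
    have hb : Hck Z (◇ Sg.fm ⇒ □ ◇ Sg.fm) := ax51 (Set.mem_union_right _ hm)
    have core : Hck Z ((◇ Sg.fm ⋏ ◇ Δ.fm) ⇒ ◇ (◇ Sg.fm ⋏ Δ.fm)) :=
      Hck.uncurry <| HckH.toHck <| .ded <|
        .mp (.thm (Hck.diaK2 (.andI _ _))) (.mp (.thm hb) .h0)
    exact .mp (ctxIn1 Γ core) h1
  | fiveStSig Γ Sg Δ =>
    have hm := hrElim hr; simp [NCKrules] at hm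
    have h1 := ih _ (List.mem_cons_self)
    rw [fillR_fm] at h1
    rw [fillF_fm]
    have h5 : Hck Z (◇ □ (Sg.L.fm ⇒ Sg.R.fm) ⇒ □ (Sg.L.fm ⇒ Sg.R.fm)) :=
      ax52 (Set.mem_union_right _ hm)
    have core : Hck Z (□ (Δ.fm ⇒ □ (Sg.L.fm ⇒ Sg.R.fm)) ⇒
        (◇ Δ.fm ⇒ □ (Sg.L.fm ⇒ Sg.R.fm))) :=
      HckH.toHck <| .ded <| .ded <|
        .mp (.thm h5) (.mp (.mp (.thm (.k2 _ _)) .h1) .h0)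
    exact .mp (ctxRF _ core) h1
  | fiveStDel Γ Sg Δ =>
    have hm := hrElim hr; simp [NCKrules] at hm
    have h1 := ih _ (List.mem_cons_self)
    rw [fillR_fm] at h1
    rw [fillF_fm]
    have h5 : Hck Z (◇ Sg.fm ⇒ □ ◇ Sg.fm) := ax51 (Set.mem_union_right _ hm)
    have taut : Hck Z (((◇ Sg.fm ⋏ Δ.L.fm) ⇒ Δ.R.fm) ⇒
        (◇ Sg.fm ⇒ (Δ.L.fm ⇒ Δ.R.fm))) :=
      HckH.toHck <| .ded <| .ded <| .ded <| .mp .h2 (HckH.andI .h1 .h0)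
    have core : Hck Z (□ ((◇ Sg.fm ⋏ Δ.L.fm) ⇒ Δ.R.fm) ⇒
        (◇ Sg.fm ⇒ □ (Δ.L.fm ⇒ Δ.R.fm))) :=
      HckH.toHck <| .ded <| .ded <|
        .mp (.mp (.thm (Hck.boxK2 taut)) .h1) (.mp (.thm h5) .h0)
    exact .mp (ctxRF _ core) h1
  | s4R Γ Δ A => have hm := hrElim hr; simp [NCKrules] at hm
  | s4LIn Γ Δ A => have hm := hrElim hr; simp [NCKrules] at hm
  | s4LOut Γ Δ A => have hm := hrElim hr; simp [NCKrules] at hm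
  | s4Rdia Γ Δ A => have hm := hrElim hr; simp [NCKrules] at hm
  | s4LboxIn Γ Δ A => have hm := hrElim hr; simp [NCKrules] at hm
  | s4LboxOut Γ Δ A => have hm := hrElim hr; simp [NCKrules] at hm
  | sbStIn Γ Δ Sg => have hm := hrElim hr; simp [NCKrules] at hm
  | sbStMid Γ Δ Sg => have hm := hrElim hr; simp [NCKrules] at hm
  | sbStOut Γ Δ Sg => have hm := hrElim hr; simp [NCKrules] at hm
  | s5StIn Γ Δ Sg => have hm := hrElim hr; simp [NCKrules] at hm
  | s5StMid Γ Δ Sg => have hm := hrElim hr; simp [NCKrules] at hm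
  | s5StOut Γ Δ Sg => have hm := hrElim hr; simp [NCKrules] at hm
  | s5bStIn Γ Δ Sg k hk1 hk2 => have hm := hrElim hr; simp [NCKrules] at hm
  | s5bStMid Γ Δ Sg k hk1 hk2 => have hm := hrElim hr; simp [NCKrules] at hm
  | s5bStOut Γ Δ Sg k hk1 hk2 => have hm := hrElim hr; simp [NCKrules] at hm
  | sb5StIn Γ Δ Sg k hk1 hk2 => have hm := hrElim hr; simp [NCKrules] at hm
  | sb5StMid Γ Δ Sg k hk1 hk2 => have hm := hrElim hr; simp [NCKrules] at hm
  | sb5StOut Γ Δ Sg k hk1 hk2 => have hm := hrElim hr; simp [NCKrules] at hm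

end Toolkit

/-- Soundness, Theorem 4.1(ii): if a full nested sequent Γ is
provable in NCK + weak + cut + X^{↓} + Y•, then fm(Γ) is provable in HCK+X+Y. -/
theorem statement0 (X Y : Set Ax)
    (hX : X ⊆ {Ax.d, Ax.t, Ax.four})
    (hY : Y ⊆ {Ax.d, Ax.t, Ax.b, Ax.four, Ax.five})
    (Γ : FullSeq)
    (h : Provable (NCKrules ∪ {RuleName.weak, RuleName.cut} ∪ lgRules X ∪ stRules Y) Γ) :
    Hck (X ∪ Y) Γ.fm := by
  obtain ⟨n, hd⟩ := h
  induction hd with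
  | step hrm hst _ hseq ih => exact seq_fm hseq (step_sound hrm hst ih)
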